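/- The set R = {x,a,y,b} is a regular closed subset of the five-point space T, its interior equals {x,a,y}, and this interior is a connected subspace of T; hence R is internally connected. -/
import Mathlib


/-- The five-point space `T = {x, y, z, a, b}` (five pairwise distinct points). -/
inductive Pt : Type
  | x | y | z | a | b
deriving DecidableEq

open Pt

/-- The topology on `T` generated by the subbasis `{x,z}`, `{y,z}`, `{x,a,y}`. -/
instance : TopologicalSpace Pt :=
  TopologicalSpace.generateFrom ({{x, z}, {y, z}, {x, a, y}} : Set (Set Pt))

lemma gen_b : ∀ U : Set Pt, TopologicalSpace.GenerateOpen
    ({{x, z}, {y, z}, {x, a, y}} : Set (Set Pt)) U → b ∈ U → U = Set.univ := by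
  intro U h
  induction h with
  | basic s hs =>
      intro hb
      rcases hs with h | h | h <;> subst h <;> simp_all
  | univ => intro _; rfl
  | inter s t _ _ ihs iht =>
      intro hb
      rw [ihs hb.1, iht hb.2, Set.univ_inter]
  | sUnion S _ ih =>
      intro hb
      rcases hb with ⟨s, hs, hbs⟩
      apply Set.eq_univ_of_univ_subset
      rw [← ih s hs hbs]
      exact Set.subset_sUnion_of_mem hs

lemma open_b {U : Set Pt} (h : IsOpen U) (hb : b ∈ U) : U = Set.univ :=
  gen_b U h hb

lemma gen_a : ∀ U : Set Pt, TopologicalSpace.GenerateOpen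
    ({{x, z}, {y, z}, {x, a, y}} : Set (Set Pt)) U → a ∈ U → x ∈ U ∧ y ∈ U := by
  intro U h
  induction h with
  | basic s hs =>
      intro ha
      rcases hs with h | h | h <;> subst h <;> simp_all
  | univ => intro _; exact ⟨trivial, trivial⟩
  | inter s t _ _ ihs iht =>
      intro ha
      exact ⟨⟨(ihs ha.1).1, (iht ha.2).1⟩, ⟨(ihs ha.1).2, (iht ha.2).2⟩⟩
  | sUnion S _ ih =>
      intro ha
      rcases ha with ⟨s, hs, has⟩
      exact ⟨⟨s, hs, (ih s hs has).1⟩, ⟨s, hs, (ih s hs has).2⟩⟩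

lemma open_xay : IsOpen ({x, a, y} : Set Pt) :=
  TopologicalSpace.GenerateOpen.basic _ (by simp)

lemma closed_R : IsClosed ({x, a, y, b} : Set Pt) := by
  rw [← isOpen_compl_iff]
  have hz : ({x, a, y, b} : Set Pt)ᶜ = ({x, z} : Set Pt) ∩ ({y, z} : Set Pt) := by
    ext p; cases p <;> simp
  rw [hz]
  exact IsOpen.inter (TopologicalSpace.GenerateOpen.basic _ (by simp))
    (TopologicalSpace.GenerateOpen.basic _ (by simp))

lemma int_R : interior ({x, a, y, b} : Set Pt) = ({x, a, y} : Set Pt) := by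
  apply subset_antisymm
  · intro p hp
    rcases mem_interior.mp hp with ⟨U, hUR, hU, hpU⟩
    by_contra hne
    have hpR := hUR hpU
    have hpb : p = b := by cases p <;> simp_all
    subst hpb
    have := open_b hU hpU
    subst this
    have : z ∈ ({x, a, y, b} : Set Pt) := hUR trivial
    simp at this
  · apply interior_maximal _ open_xay
    intro p hp
    simp only [Set.mem_insert_iff, Set.mem_singleton_iff] at hp ⊢
    tauto

/-- The set R = {x,a,y,b} is regular closed in T, its interior equals
{x,a,y}, and this interior is a connected subspace of T; hence R is internally
connected. -/
theorem stmt6 :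
    ({x, a, y, b} : Set Pt) = closure (interior ({x, a, y, b} : Set Pt)) ∧
    interior ({x, a, y, b} : Set Pt) = ({x, a, y} : Set Pt) ∧
    IsConnected (interior ({x, a, y, b} : Set Pt)) := by
  refine ⟨?_, int_R, ?_⟩
  · rw [int_R]
    apply subset_antisymm
    · intro p hp
      rw [mem_closure_iff]
      intro U hU hpU
      simp only [Set.mem_insert_iff, Set.mem_singleton_iff] at hp
      rcases hp with h | h | h | h
      · subst h; exact ⟨x, hpU, by simp⟩
      · subst h; exact ⟨a, hpU, by simp⟩
      · subst h; exact ⟨y, hpU, by simp⟩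
      · subst h
        have := open_b hU hpU
        subst this
        exact ⟨x, trivial, by simp⟩
    · rw [← closed_R.closure_eq]
      apply closure_mono
      intro p hp
      simp only [Set.mem_insert_iff, Set.mem_singleton_iff] at hp ⊢
      tauto
  · rw [int_R]
    constructor
    · exact ⟨x, by simp⟩
    · intro U V hU hV hcov ⟨u, huS, huU⟩ ⟨v, hvS, hvV⟩
      -- a is in U or V
      have ha : a ∈ ({x, a, y} : Set Pt) := by simp
      rcases hcov ha with haU | haV
      · have hxy := gen_a U hU haU
        have hvU : v ∈ U := by
          simp only [Set.mem_insert_iff, Set.mem_singleton_iff] at hvS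
          rcases hvS with h | h | h <;> subst h
          · exact hxy.1
          · exact haU
          · exact hxy.2
        exact ⟨v, Set.mem_inter hvS (Set.mem_inter hvU hvV)⟩
      · have hxy := gen_a V hV haV
        have huV : u ∈ V := by
          simp only [Set.mem_insert_iff, Set.mem_singleton_iff] at huS
          rcases huS with h | h | h <;> subst h
          · exact hxy.1
          · exact haV
          · exact hxy.2
        exact ⟨u, Set.mem_inter huS (Set.mem_inter huU huV)⟩
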